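/- Let p be an odd prime and q a prime with q ≡ 1 (mod p) and q ≢ 1 (mod p²), and let A be the cyclic group of order p²q. Then there is no regular subgroup G of Hol(A) such that the image π₂(G) has order p². -/

import Mathlib

open Finset Multiplicative

/-- Left component of a power in a semidirect product with abelian kernel. -/
lemma hol_pow_left {N G : Type*} [CommGroup N] [Group G] {φ : G →* MulAut N}
    (g : N ⋊[φ] G) (k : ℕ) :
    (g ^ k).left = ∏ i ∈ Finset.range k, φ (g.right ^ i) g.left := by
  induction k with
  | zero => simp
  | succ k ih =>
      rw [pow_succ, SemidirectProduct.mul_left, ih, Finset.prod_range_succ]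
      congr 2
      have : (g ^ k).right = g.right ^ k := by
        simpa using map_pow SemidirectProduct.rightHom g k
      rw [this]

lemma hol_pow_right {N G : Type*} [Group N] [Group G] {φ : G →* MulAut N}
    (g : N ⋊[φ] G) (k : ℕ) : (g ^ k).right = g.right ^ k := by
  simpa using map_pow SemidirectProduct.rightHom g k

/-- An automorphism of `Multiplicative (ZMod n)` is multiplication by its value at 1. -/
lemma mulAut_apply_eq {n : ℕ} [NeZero n] (f : MulAut (Multiplicative (ZMod n)))
    (x : Multiplicative (ZMod n)) :
    toAdd (f x) = toAdd x * toAdd (f (ofAdd 1)) := by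
  set F : ZMod n →+ ZMod n := AddMonoidHom.mk' (fun y => toAdd (f (ofAdd y)))
    (fun a b => by
      have : ofAdd (a + b) = ofAdd a * ofAdd b := rfl
      simp [this]) with hF
  have hFx : ∀ y : ZMod n, F y = y * F 1 := by
    intro y
    have h1 : (y.val : ZMod n) = y := ZMod.natCast_zmod_val y
    have h2 : y = y.val • (1 : ZMod n) := by rw [nsmul_eq_mul, mul_one, h1]
    calc F y = F (y.val • (1 : ZMod n)) := by rw [← h2]
      _ = y.val • F 1 := map_nsmul F _ _
      _ = (y.val : ZMod n) * F 1 := by rw [nsmul_eq_mul]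
      _ = y * F 1 := by rw [h1]
  have := hFx (toAdd x)
  simpa [hF] using this

lemma mulAut_pow_apply {n : ℕ} [NeZero n] (f : MulAut (Multiplicative (ZMod n)))
    (x : Multiplicative (ZMod n)) (k : ℕ) :
    toAdd ((f ^ k) x) = toAdd x * (toAdd (f (ofAdd 1))) ^ k := by
  induction k with
  | zero => simp
  | succ k ih =>
      have h : (f ^ (k+1)) x = f ((f ^ k) x) := by
        rw [pow_succ']
        rfl
      rw [h, mulAut_apply_eq f ((f ^ k) x), ih, pow_succ]
      ring

lemma geom_sum_p {p : ℕ} (hp : p.Prime) (hodd : Odd p) (v : ZMod (p ^ 2))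
    (hv : v ^ p = 1) : ∑ i ∈ Finset.range p, v ^ i = (p : ZMod (p ^ 2)) := by
  haveI : Fact p.Prime := ⟨hp⟩
  haveI : NeZero (p ^ 2) := ⟨pow_ne_zero 2 hp.ne_zero⟩
  have hdvd : p ∣ p ^ 2 := ⟨p, sq p⟩
  set ψ := ZMod.castHom hdvd (ZMod p) with hψ
  have h1 : ψ v = 1 := by
    have hpow : (ψ v) ^ p = 1 := by rw [← map_pow, hv, map_one]
    have h2 : (ψ v) ^ p = ψ v := ZMod.pow_card _
    rw [← h2, hpow]
  have h3 : p ∣ (v - 1).val := by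
    have h0 : ψ (v - 1) = 0 := by rw [map_sub, h1, map_one, sub_self]
    rwa [ZMod.castHom_apply, ← ZMod.natCast_val, ZMod.natCast_eq_zero_iff] at h0
  obtain ⟨m, hm⟩ := h3
  set t := (m : ZMod (p ^ 2)) with ht
  have hv1 : v = 1 + (p : ZMod (p ^ 2)) * t := by
    have hval : ((v - 1).val : ZMod (p ^ 2)) = v - 1 := ZMod.natCast_zmod_val _
    rw [hm] at hval
    push_cast at hval
    linear_combination -hval
  have hp2 : (p : ZMod (p ^ 2)) * p = 0 := by
    have hs : ((p ^ 2 : ℕ) : ZMod (p ^ 2)) = 0 := ZMod.natCast_self _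
    push_cast at hs
    linear_combination hs
  have hpow : ∀ i : ℕ, v ^ i = 1 + (i : ZMod (p ^ 2)) * ((p : ZMod (p ^ 2)) * t) := by
    intro i
    induction i with
    | zero => simp
    | succ i ih =>
        push_cast
        linear_combination v * ih + (1 + (i : ZMod (p ^ 2)) * ((p : ZMod (p ^ 2)) * t)) * hv1 +
          ((i : ZMod (p ^ 2)) * t * t) * hp2
  calc ∑ i ∈ Finset.range p, v ^ i
      = ∑ i ∈ Finset.range p, (1 + (i : ZMod (p ^ 2)) * ((p : ZMod (p ^ 2)) * t)) :=
        Finset.sum_congr rfl (fun i _ => hpow i)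
    _ = (p : ZMod (p ^ 2)) := by
        rw [Finset.sum_add_distrib, Finset.sum_const, Finset.card_range, ← Finset.sum_mul]
        have hsum : (∑ i ∈ Finset.range p, (i : ZMod (p ^ 2))) * ((p : ZMod (p ^ 2)) * t) = 0 := by
          obtain ⟨m', hm'⟩ := hodd
          have hG : (∑ i ∈ Finset.range p, i) = m' * p := by
            have hg := Finset.sum_range_id_mul_two p
            have h2 : p * (p - 1) = m' * p * 2 := by
              have e : p - 1 = 2 * m' := by omega
              rw [e, hm']
              ring
            exact Nat.eq_of_mul_eq_mul_right (by norm_num) (hg.trans h2)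
          rw [← Nat.cast_sum, hG]
          push_cast
          linear_combination ((m' : ZMod (p ^ 2)) * t) * hp2
        rw [hsum, add_zero, nsmul_eq_mul, mul_one]

/-- If `a` is a unit of `ZMod m` with `a ^ k = 1`, and every common divisor of `k` and
`totient m` divides `e`, then `a ^ e = 1`. -/
lemma zmod_pow_eq_one_of {m : ℕ} [NeZero m] {a b : ZMod m} (hab : a * b = 1) {k e : ℕ}
    (hk : a ^ k = 1) (he : ∀ d : ℕ, d ∣ k → d ∣ Nat.totient m → d ∣ e) : a ^ e = 1 := by
  set au : (ZMod m)ˣ := Units.mkOfMulEqOne a b hab with hau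
  have hval : (au : ZMod m) = a := rfl
  have h1 : au ^ k = 1 := by
    ext
    simpa [hval] using hk
  have h2 : orderOf au ∣ k := orderOf_dvd_of_pow_eq_one h1
  have h3 : orderOf au ∣ Nat.totient m := by
    have := orderOf_dvd_card (x := au)
    rwa [ZMod.card_units_eq_totient] at this
  have h4 : au ^ e = 1 := orderOf_dvd_iff_pow_eq_one.mp (he _ h2 h3)
  have := congrArg Units.val h4
  simpa [hval] using this

/-- The holomorph `Hol(A) = A ⋊ Aut(A)` of a group `A`. -/
abbrev Hol (A : Type*) [Group A] :=
  SemidirectProduct A (MulAut A) (MonoidHom.id (MulAut A))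

/-- The natural action of an element `(a, f)` of `Hol(A)` on `A`: `(a, f) · x = a * f x`. -/
def holSmul {A : Type*} [Group A] (g : Hol A) (x : A) : A :=
  g.left * g.right x

/-- A subgroup `G ≤ Hol(A)` is regular if for all `x y : A` there is exactly one
`g ∈ G` with `g · x = y`. -/
def IsRegularSubgroup {A : Type*} [Group A] (G : Subgroup (Hol A)) : Prop :=
  ∀ x y : A, ∃! g : G, holSmul (g : Hol A) x = y

/-- Let `p` be an odd prime and `q` a prime with `q ≡ 1 (mod p)` but `q ≢ 1 (mod p²)`,
and let `A` be the cyclic group of order `p²q`.  Then there is no regular subgroup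
`G ≤ Hol(A)` whose image under `π₂ : Hol(A) → Aut(A)` has order `p²`. -/
theorem stmt_14 (p q : ℕ) (hp : p.Prime) (hpodd : Odd p) (hq : q.Prime)
    (hmod : q ≡ 1 [MOD p]) (hmod2 : ¬ q ≡ 1 [MOD p ^ 2]) :
    ¬ ∃ G : Subgroup (Hol (Multiplicative (ZMod (p ^ 2 * q)))),
        IsRegularSubgroup G ∧
        Nat.card (G.map SemidirectProduct.rightHom) = p ^ 2 := by
  rintro ⟨G, hreg, hcard⟩
  have hp2le : 2 ≤ p := hp.two_le
  have hq2le : 2 ≤ q := hq.two_le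
  haveI : Fact p.Prime := ⟨hp⟩
  haveI : Fact q.Prime := ⟨hq⟩
  haveI hnz : NeZero (p ^ 2 * q) := ⟨by positivity⟩
  have hpq1 : p ∣ q - 1 := (Nat.modEq_iff_dvd' (by omega)).mp hmod.symm
  have hne : p ≠ q := by
    rintro rfl
    have := Nat.le_of_dvd (by omega) hpq1
    omega
  have hco : Nat.Coprime (p ^ 2) q := ((Nat.coprime_primes hp hq).mpr hne).pow_left 2
  have hd1 : p ^ 2 ∣ p ^ 2 * q := ⟨q, rfl⟩
  have hd2 : q ∣ p ^ 2 * q := ⟨p ^ 2, mul_comm _ _⟩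
  -- |G| = p² q
  have hbij : Function.Bijective
      (fun g : G => holSmul (g : Hol (Multiplicative (ZMod (p ^ 2 * q)))) 1) :=
    (Function.bijective_iff_existsUnique _).mpr (fun y => hreg 1 y)
  have hcardG : Nat.card G = p ^ 2 * q := by
    rw [Nat.card_congr (Equiv.ofBijective _ hbij),
      Nat.card_congr (Multiplicative.toAdd (α := ZMod (p ^ 2 * q))), Nat.card_zmod]
  -- kernel of π₂ restricted to G has q elements
  set φ := SemidirectProduct.rightHom.comp G.subtype with hφ
  have hrange : φ.range = G.map SemidirectProduct.rightHom := by
    rw [hφ, MonoidHom.range_comp, Subgroup.range_subtype]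
  have hkerq : Nat.card φ.ker = q := by
    have h1 := Subgroup.card_eq_card_quotient_mul_card_subgroup φ.ker
    have h2 : Nat.card (G ⧸ φ.ker) = p ^ 2 := by
      rw [Nat.card_congr (QuotientGroup.quotientKerEquivRange φ).toEquiv, hrange, hcard]
    rw [hcardG, h2] at h1
    exact (Nat.eq_of_mul_eq_mul_left (by positivity) h1).symm
  set ψ₁ := ZMod.castHom hd1 (ZMod (p ^ 2)) with hψ₁
  set ψ₂ := ZMod.castHom hd2 (ZMod q) with hψ₂
  -- key claim
  have key : ∀ g : Hol (Multiplicative (ZMod (p ^ 2 * q))), g ∈ G →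
      (p : ZMod (p ^ 2)) * ψ₁ (toAdd g.left) = 0 := by
    intro g hg
    set f := g.right with hf
    have hfmem : f ∈ G.map SemidirectProduct.rightHom := ⟨g, hg, rfl⟩
    have hford : orderOf f ∣ p ^ 2 := by
      have h := Subgroup.orderOf_dvd_natCard _ hfmem
      rwa [hcard] at h
    have hf2 : f ^ (p ^ 2) = 1 := orderOf_dvd_iff_pow_eq_one.mp hford
    set u := toAdd (f (ofAdd (1 : ZMod (p ^ 2 * q)))) with hu
    have hu2 : u ^ (p ^ 2) = 1 := by
      have h := mulAut_pow_apply f (ofAdd (1 : ZMod (p ^ 2 * q))) (p ^ 2)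
      rw [hf2] at h
      simpa using h.symm
    set u' := toAdd (f⁻¹ (ofAdd (1 : ZMod (p ^ 2 * q)))) with hu'
    have huu' : u * u' = 1 := by
      have h := mulAut_apply_eq f⁻¹ (f (ofAdd (1 : ZMod (p ^ 2 * q))))
      have h2 : f⁻¹ (f (ofAdd (1 : ZMod (p ^ 2 * q)))) = ofAdd (1 : ZMod (p ^ 2 * q)) := by
        simp [MulAut.inv_def]
      rw [h2] at h
      rw [hu, hu']
      simpa [MulAut.inv_def] using h.symm
    -- mod p² : (ψ₁ u) ^ p = 1
    have hvp : (ψ₁ u) ^ p = 1 := by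
      refine zmod_pow_eq_one_of (b := ψ₁ u') (by rw [← map_mul, huu', map_one])
        (k := p ^ 2) (by rw [← map_pow, hu2, map_one]) ?_
      intro d h1 h2
      rw [Nat.totient_prime_pow hp (by norm_num)] at h2
      have hcop : Nat.gcd p (p - 1) = 1 := by
        have hd := Nat.dvd_sub (Nat.gcd_dvd_left p (p - 1)) (Nat.gcd_dvd_right p (p - 1))
        have e : p - (p - 1) = 1 := by omega
        rw [e] at hd
        exact Nat.dvd_one.mp hd
      have hgcd : Nat.gcd (p ^ 2) (p ^ (2 - 1) * (p - 1)) = p := by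
        have hsq : p ^ 2 = p * p := sq p
        rw [hsq]
        norm_num [Nat.gcd_mul_left, hcop]
      have := Nat.dvd_gcd h1 h2
      rwa [hgcd] at this
    -- mod q : (ψ₂ u) ^ p = 1
    have hwp : (ψ₂ u) ^ p = 1 := by
      refine zmod_pow_eq_one_of (b := ψ₂ u') (by rw [← map_mul, huu', map_one])
        (k := p ^ 2) (by rw [← map_pow, hu2, map_one]) ?_
      intro d h1 h2
      rw [Nat.totient_prime hq] at h2
      obtain ⟨k, hk2, rfl⟩ := (Nat.dvd_prime_pow hp).mp h1
      interval_cases k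
      · exact one_dvd p
      · simp
      · exact absurd ((Nat.modEq_iff_dvd' (by omega)).mpr h2).symm hmod2
    -- hence u ^ p = 1
    have hup : u ^ p = 1 := by
      have e1 : p ^ 2 ∣ (u ^ p - 1).val := by
        have h0 : ψ₁ (u ^ p - 1) = 0 := by rw [map_sub, map_pow, hvp, map_one, sub_self]
        rwa [ZMod.castHom_apply, ← ZMod.natCast_val, ZMod.natCast_eq_zero_iff] at h0
      have e2 : q ∣ (u ^ p - 1).val := by
        have h0 : ψ₂ (u ^ p - 1) = 0 := by rw [map_sub, map_pow, hwp, map_one, sub_self]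
        rwa [ZMod.castHom_apply, ← ZMod.natCast_val, ZMod.natCast_eq_zero_iff] at h0
      have e3 : p ^ 2 * q ∣ (u ^ p - 1).val := hco.mul_dvd_of_dvd_of_dvd e1 e2
      have e4 : ((u ^ p - 1).val : ZMod (p ^ 2 * q)) = 0 :=
        (ZMod.natCast_eq_zero_iff _ _).mpr e3
      rw [ZMod.natCast_zmod_val] at e4
      exact sub_eq_zero.mp e4
    -- hence f ^ p = 1
    have hfp : f ^ p = 1 := by
      refine DFunLike.ext _ _ fun x => ?_
      have h := mulAut_pow_apply f x p
      rw [hup, mul_one] at h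
      exact Multiplicative.toAdd.injective (by simpa using h)
    -- g ^ p lies in the kernel
    have hgpr : (g ^ p).right = 1 := by rw [hol_pow_right, ← hf, hfp]
    have hgpG : g ^ p ∈ G := pow_mem hg p
    have hmemker : (⟨g ^ p, hgpG⟩ : G) ∈ φ.ker := by
      rw [MonoidHom.mem_ker, hφ]
      simpa using hgpr
    have hordk : orderOf (⟨g ^ p, hgpG⟩ : G) ∣ q := by
      have h := Subgroup.orderOf_dvd_natCard _ hmemker
      rwa [hkerq] at h
    have hgpq : (g ^ p) ^ q = 1 := by
      have h := orderOf_dvd_iff_pow_eq_one.mp hordk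
      have := congrArg (Subgroup.subtype G) h
      simpa using this
    set c := (g ^ p).left with hc
    have hcq : c ^ q = 1 := by
      have h := congrArg SemidirectProduct.left hgpq
      rw [hol_pow_left, hgpr] at h
      simpa [← hc] using h
    have hcL : toAdd c = ∑ i ∈ Finset.range p, toAdd g.left * u ^ i := by
      rw [hc, hol_pow_left, toAdd_prod]
      exact Finset.sum_congr rfl fun i _ => by
        simpa using mulAut_pow_apply f g.left i
    have hq0 : (q : ZMod (p ^ 2)) * ψ₁ (toAdd c) = 0 := by
      have h := congrArg toAdd hcq
      rw [toAdd_pow, toAdd_one] at h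
      have h2 := congrArg ψ₁ h
      rw [map_nsmul, map_zero] at h2
      rwa [nsmul_eq_mul] at h2
    have hψc : ψ₁ (toAdd c) = 0 := by
      have hqu : IsUnit (q : ZMod (p ^ 2)) := by
        have := (ZMod.unitOfCoprime q hco.symm).isUnit
        rwa [ZMod.coe_unitOfCoprime] at this
      exact (IsUnit.mul_right_eq_zero hqu).mp hq0
    have hgeom : ∑ i ∈ Finset.range p, (ψ₁ u) ^ i = (p : ZMod (p ^ 2)) :=
      geom_sum_p hp hpodd _ hvp
    have hcval : ψ₁ (toAdd c) = ψ₁ (toAdd g.left) * (p : ZMod (p ^ 2)) := by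
      rw [hcL, map_sum]
      simp_rw [map_mul, map_pow]
      rw [← Finset.mul_sum, hgeom]
    rw [hcval] at hψc
    linear_combination hψc
  -- conclusion
  obtain ⟨g₀, hg₀, -⟩ := hreg 1 (ofAdd (1 : ZMod (p ^ 2 * q)))
  have hg₀l : (g₀ : Hol (Multiplicative (ZMod (p ^ 2 * q)))).left
      = ofAdd (1 : ZMod (p ^ 2 * q)) := by
    have h : holSmul (g₀ : Hol (Multiplicative (ZMod (p ^ 2 * q)))) 1
        = (g₀ : Hol (Multiplicative (ZMod (p ^ 2 * q)))).left := by
      simp [holSmul]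
    rw [← h, hg₀]
  have hfin := key (g₀ : Hol (Multiplicative (ZMod (p ^ 2 * q)))) g₀.2
  rw [hg₀l] at hfin
  simp only [toAdd_ofAdd, map_one, mul_one] at hfin
  have hdvd : (p ^ 2 : ℕ) ∣ p := (ZMod.natCast_eq_zero_iff p (p ^ 2)).mp hfin
  have := Nat.le_of_dvd hp.pos hdvd
  nlinarith
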